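/- Let G be a connected (n,k,λ,μ)-strongly regular graph with k·(k − λ − 1) ≠ 0, and suppose there exist adjacent vertices u, v such that every vertex w is equal to u or v or adjacent to at least one of u, v. Then G is a complete multipartite graph with parts of equal size: non-adjacency together with equality is an equivalence relation on the vertices (i.e., for pairwise distinct x, y, z, if x is non-adjacent to y and y is non-adjacent to z then x is non-adjacent to z), and there exists m such that for every vertex v the set {w | w = v or w is non-adjacent to v} has exactly m elements. -/

import Mathlib

open Finset

theorem stmt15 {V : Type*} [Fintype V] [DecidableEq V] (G : SimpleGraph V)
    [DecidableRel G.Adj] {n k l μ : ℕ}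
    (hsrg : G.IsSRGWith n k l μ) (hconn : G.Connected)
    (hnonzero : (k : ℤ) * ((k : ℤ) - l - 1) ≠ 0)
    (u v : V) (huv : G.Adj u v)
    (hdom : ∀ w : V, w = u ∨ w = v ∨ G.Adj u w ∨ G.Adj v w) :
    (∀ x y z : V, x ≠ y → y ≠ z → x ≠ z →
        ¬G.Adj x y → ¬G.Adj y z → ¬G.Adj x z) ∧
      ∃ m : ℕ, ∀ x : V,
        (Finset.univ.filter fun w => w = x ∨ ¬G.Adj x w).card = m := by
  classical
  -- l < k
  have hlk : l < k := by
    have h1 := huv.card_commonNeighbors_lt_degree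
    rwa [hsrg.of_adj u v huv, hsrg.regular u] at h1
  have hk0 : k ≠ 0 := by
    intro h; apply hnonzero; simp [h]
  have hkl1 : k ≠ l + 1 := by
    intro h; apply hnonzero
    rw [h]; push_cast; ring
  have hlk2 : l + 2 ≤ k := by omega
  -- the whole vertex set is N(u) ∪ N(v)
  have huniv : G.neighborFinset u ∪ G.neighborFinset v = Finset.univ := by
    ext w
    simp only [Finset.mem_union, SimpleGraph.mem_neighborFinset, Finset.mem_univ, iff_true]
    rcases hdom w with rfl | rfl | h | h
    · exact Or.inr huv.symm
    · exact Or.inl huv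
    · exact Or.inl h
    · exact Or.inr h
  -- n = 2k - l
  have hn : n = 2 * k - l := by
    have h1 := hsrg.card_neighborFinset_union_of_adj huv
    rw [huniv, Finset.card_univ, hsrg.card] at h1
    exact h1
  have hnpos : 0 < n := by omega
  -- μ = k
  have hparam := SimpleGraph.IsSRGWith.param_eq G hsrg hnpos
  have hmu : μ = k := by
    have h2 : n - k - 1 = k - l - 1 := by omega
    rw [h2] at hparam
    have h3 : (k - l - 1) * k = (k - l - 1) * μ := by
      rw [← hparam]; ring
    have h4 : k - l - 1 ≠ 0 := by omega
    exact (Nat.eq_of_mul_eq_mul_left (Nat.pos_of_ne_zero h4) h3).symm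
  -- for nonadjacent distinct x y, N(x) ⊆ N(y)
  have hsub : ∀ x y : V, x ≠ y → ¬G.Adj x y →
      G.neighborFinset x ⊆ G.neighborFinset y := by
    intro x y hne hna
    have hc : (G.neighborFinset x ∩ G.neighborFinset y).card = k := by
      have h1 := hsrg.of_not_adj hne hna
      rw [hmu] at h1
      rw [← h1, ← Set.toFinset_card]
      congr 1
      ext z
      simp [SimpleGraph.mem_commonNeighbors, SimpleGraph.mem_neighborFinset]
    have hcard : (G.neighborFinset x).card ≤
        (G.neighborFinset x ∩ G.neighborFinset y).card := by
      rw [hc, G.card_neighborFinset_eq_degree, hsrg.regular x]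
    have heq := Finset.eq_of_subset_of_card_le Finset.inter_subset_left hcard
    exact Finset.inter_eq_left.mp heq
  constructor
  · intro x y z hxy hyz hxz hnxy hnyz hadj
    have : z ∈ G.neighborFinset y := hsub x y hxy hnxy
      (by rwa [SimpleGraph.mem_neighborFinset])
    rw [SimpleGraph.mem_neighborFinset] at this
    exact hnyz this
  · refine ⟨Fintype.card V - k, fun x => ?_⟩
    have hfe : (Finset.univ.filter fun w => w = x ∨ ¬G.Adj x w) =
        (G.neighborFinset x)ᶜ := by
      ext w
      simp only [Finset.mem_filter, Finset.mem_univ, true_and, Finset.mem_compl,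
        SimpleGraph.mem_neighborFinset]
      constructor
      · rintro (rfl | h)
        · exact fun h => G.irrefl h
        · exact h
      · exact Or.inr
    rw [hfe, Finset.card_compl, G.card_neighborFinset_eq_degree, hsrg.regular x]
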